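/- Let G be a group, φ an automorphism of G, and H a central subgroup of G with φ(H) = H. Let φ′ denote the automorphism of H induced by φ, and φ̄ the automorphism of G/H induced by φ. Then R(φ) ≤ R(φ′) · R(φ̄), where the product is taken in ℕ ∪ {∞}. -/

import Mathlib

open Matrix

/-- `x` and `y` are twisted conjugate with respect to the automorphism `φ`,
i.e. `x = z * y * (φ z)⁻¹` for some `z`. -/
def TwistedConj {G : Type*} [Group G] (φ : G ≃* G) (x y : G) : Prop :=
  ∃ z : G, x = z * y * (φ z)⁻¹

/-- The Reidemeister number of an automorphism: the number of twisted conjugacy classes,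
as an element of `ℕ∞ = ℕ ∪ {∞}` (`⊤` meaning infinitely many classes). -/
noncomputable def reidemeisterNumber {G : Type*} [Group G] (φ : G ≃* G) : ℕ∞ :=
  Cardinal.toENat (Cardinal.mk (Quot (TwistedConj φ)))

theorem twistedConj_equivalence {G : Type*} [Group G] (φ : G ≃* G) :
    Equivalence (TwistedConj φ) := by
  constructor
  · intro x; exact ⟨1, by simp⟩
  · rintro x y ⟨z, rfl⟩
    exact ⟨z⁻¹, by simp [map_inv, mul_assoc]⟩
  · rintro x y u ⟨z, rfl⟩ ⟨w, rfl⟩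
    exact ⟨z * w, by simp [_root_.map_mul, mul_assoc]⟩

theorem twistedConj_of_mk_eq {G : Type*} [Group G] (φ : G ≃* G) {a b : G}
    (h : Quot.mk (TwistedConj φ) a = Quot.mk (TwistedConj φ) b) : TwistedConj φ a b :=
  ((twistedConj_equivalence φ).eqvGen_iff).mp (Quot.eq.mp h)

/-- If `H` is a `φ`-invariant central subgroup of `G`, `φ'` the induced automorphism of `H`
and `φ̄` the induced automorphism of `G ⧸ H`, then `R(φ) ≤ R(φ') · R(φ̄)` in `ℕ ∪ {∞}`. -/
theorem reidemeisterNumber_le_mul_of_central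
    {G : Type*} [Group G] (φ : G ≃* G) (H : Subgroup G) [H.Normal]
    (hcent : H ≤ Subgroup.center G) (hinv : ∀ x : G, x ∈ H ↔ φ x ∈ H)
    (φ' : H ≃* H) (hφ' : ∀ h : H, ((φ' h : H) : G) = φ (h : G))
    (φbar : (G ⧸ H) ≃* (G ⧸ H))
    (hφbar : ∀ g : G, φbar ((g : G) : G ⧸ H) = ((φ g : G) : G ⧸ H)) :
    reidemeisterNumber φ ≤ reidemeisterNumber φ' * reidemeisterNumber φbar := by
  -- construct a surjection from classes of φ' × classes of φ̄ onto classes of φ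
  set f : Quot (TwistedConj φ') × Quot (TwistedConj φbar) → Quot (TwistedConj φ) :=
    fun p => Quot.mk _ ((Quotient.out (Quot.out p.2)) * ((Quot.out p.1 : H) : G)) with hfdef
  have hf : Function.Surjective f := by
    intro q
    obtain ⟨x, rfl⟩ := Quot.exists_rep q
    set b : Quot (TwistedConj φbar) := Quot.mk _ ((x : G) : G ⧸ H) with hb
    set g : G := Quotient.out (Quot.out b) with hgdef
    have hg : ((g : G) : G ⧸ H) = Quot.out b := QuotientGroup.out_eq' _
    -- the class of x in G⧸H is twisted conjugate to Quot.out b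
    have h1 : TwistedConj φbar ((x : G) : G ⧸ H) ((g : G) : G ⧸ H) := by
      rw [hg]
      exact twistedConj_of_mk_eq φbar (Quot.out_eq b).symm
    obtain ⟨zb, hzb⟩ := h1
    obtain ⟨z, rfl⟩ := QuotientGroup.mk_surjective zb
    rw [hφbar, ← QuotientGroup.mk_inv, ← QuotientGroup.mk_mul, ← QuotientGroup.mk_mul] at hzb
    -- so (z * g * (φ z)⁻¹)⁻¹ * x ∈ H
    have h0mem : (z * g * (φ z)⁻¹)⁻¹ * x ∈ H := (QuotientGroup.eq).mp hzb.symm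
    set h : H := ⟨(z * g * (φ z)⁻¹)⁻¹ * x, h0mem⟩ with hh
    have hx : x = z * g * (φ z)⁻¹ * (h : G) := by
      simp [hh, mul_assoc]
    set a : Quot (TwistedConj φ') := Quot.mk _ h with ha
    refine ⟨(a, b), ?_⟩
    -- relation between Quot.out a and h
    have h2 : TwistedConj φ' (Quot.out a) h := twistedConj_of_mk_eq φ' (Quot.out_eq a)
    obtain ⟨w, hw⟩ := h2
    -- centrality facts
    have hcomm : ∀ (u : H) (v : G), (u : G) * v = v * (u : G) := fun u v =>
      ((Subgroup.mem_center_iff.mp (hcent u.2)) v).symm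
    -- show g * (Quot.out a : G) is twisted conjugate to x
    have key : TwistedConj φ (g * ((Quot.out a : H) : G)) x := by
      refine ⟨(w : G) * z⁻¹, ?_⟩
      have hwc : ((φ' w : H) : G) = φ (w : G) := hφ' w
      have : ((Quot.out a : H) : G) = (w : G) * (h : G) * (φ (w : G))⁻¹ := by
        rw [← hwc]
        exact_mod_cast congrArg (Subtype.val) hw
      rw [this, hx]
      have e1 : (φ z)⁻¹ * (h : G) * φ z = (h : G) := by
        rw [← hcomm h ((φ z)⁻¹)]; group
      calc g * ((w : G) * (h : G) * (φ (w : G))⁻¹)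
          = g * (w : G) * (h : G) * (φ (w : G))⁻¹ := by group
        _ = (w : G) * g * (h : G) * (φ (w : G))⁻¹ := by rw [← hcomm w g]
        _ = (w : G) * (g * ((φ z)⁻¹ * (h : G) * φ z)) * (φ (w : G))⁻¹ := by
            rw [e1]; group
        _ = (w : G) * z⁻¹ * (z * g * (φ z)⁻¹ * (h : G)) * (φ ((w : G) * z⁻¹))⁻¹ := by
            simp only [_root_.map_mul, map_inv]; group
    exact Quot.sound key
  -- now compare cardinalities
  have hcard : Cardinal.mk (Quot (TwistedConj φ))
      ≤ Cardinal.mk (Quot (TwistedConj φ') × Quot (TwistedConj φbar)) :=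
    Cardinal.mk_le_of_surjective hf
  simpa [reidemeisterNumber, Cardinal.mk_prod, Cardinal.lift_id, _root_.map_mul] using
    Cardinal.toENat.monotone' hcard
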